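/- Let A ∈ ℤ^{m×n} have all entries bounded in absolute value by Δ and let b ∈ ℤ^m. The system Ax = b, x ∈ ℤ^n_{≥0} has a solution if and only if there exist an integer t ≥ 0 and a sequence of column indices i_1, …, i_t ∈ {1, …, n} such that the corresponding columns a_{i_1}, …, a_{i_t} of A satisfy a_{i_1} + ⋯ + a_{i_t} = b and, for every j ∈ {1, …, t}, the partial sum a_{i_1} + ⋯ + a_{i_j} lies in the set 𝒮 = {x ∈ ℤ^m : there exists j' ∈ {1, …, t} with ‖x − (j'/t)·b‖_∞ ≤ 2mΔ}. -/

import Mathlib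

open Finset

section SteinitzDP

variable {ι : Type*} [Fintype ι] [DecidableEq ι]

set_option linter.unusedSectionVars false
set_option linter.unusedVariables false
set_option maxHeartbeats 1000000


/-- membership in the level-`c` transportation polytope on support `T`. -/
def QSet {m : ℕ} (v : ι → Fin m → ℝ) (T : Finset ι) (c : ℝ) (z : ι → ℝ) : Prop :=
  (∀ i ∈ T, 0 ≤ z i ∧ z i ≤ 1) ∧ (∑ i ∈ T, z i) = c ∧ ∀ r, ∑ i ∈ T, z i * v i r = 0


lemma few_fractional {m : ℕ} (v : ι → Fin m → ℝ) (T : Finset ι) (c : ℝ)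
    (hne : ∃ z, QSet v T c z) :
    ∃ z, QSet v T c z ∧ (T.filter (fun i => z i ≠ 0 ∧ z i ≠ 1)).card ≤ m + 1 := by
  classical
  set Aset : Set ℕ := {N | ∃ z, QSet v T c z ∧ (T.filter (fun i => z i = 0 ∨ z i = 1)).card = N}
    with hAset
  obtain ⟨z0, hz0⟩ := hne
  have hAne : Aset.Nonempty := ⟨_, z0, hz0, rfl⟩
  have hAbdd : BddAbove Aset := by
    refine ⟨T.card, ?_⟩
    rintro N ⟨z, -, rfl⟩
    exact card_filter_le _ _
  obtain ⟨z, hz, hzcard⟩ := Nat.sSup_mem hAne hAbdd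
  refine ⟨z, hz, ?_⟩
  by_contra hbig
  push_neg at hbig
  set F : Finset ι := T.filter (fun i => z i ≠ 0 ∧ z i ≠ 1) with hF
  have hFT : F ⊆ T := filter_subset _ _
  have hFrac : ∀ i ∈ F, 0 < z i ∧ z i < 1 := by
    intro i hi
    rw [hF, mem_filter] at hi
    obtain ⟨hiT, h0, h1⟩ := hi
    exact ⟨lt_of_le_of_ne (hz.1 i hiT).1 (Ne.symm h0), lt_of_le_of_ne (hz.1 i hiT).2 h1⟩
  -- linear dependence
  have hdep : ¬ LinearIndependent ℝ (fun i : ↥F => ((v i, 1) : (Fin m → ℝ) × ℝ)) := by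
    intro hli
    have := hli.fintype_card_le_finrank
    rw [Fintype.card_coe] at this
    have hfr : Module.finrank ℝ ((Fin m → ℝ) × ℝ) = m + 1 := by simp
    omega
  rw [Fintype.not_linearIndependent_iff] at hdep
  obtain ⟨g, hg, i0, hgi0⟩ := hdep
  set d : ι → ℝ := fun i => if h : i ∈ F then g ⟨i, h⟩ else 0 with hd
  have hd0 : ∀ i, i ∉ F → d i = 0 := fun i hi => dif_neg hi
  have hdmem : ∀ i : ↥F, d i = g i := fun i => dif_pos i.2
  have hsum1 : ∑ i ∈ T, d i = 0 := by
    rw [← Finset.sum_subset hFT (fun i _ hi => hd0 i hi)]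
    rw [← Finset.sum_attach F (fun i => d i)]
    have h2 := congrArg Prod.snd hg
    rw [Prod.snd_sum] at h2
    simpa [hdmem] using h2
  have hsum2 : ∀ r, ∑ i ∈ T, d i * v i r = 0 := by
    intro r
    rw [← Finset.sum_subset hFT (fun i _ hi => by rw [hd0 i hi, zero_mul])]
    rw [← Finset.sum_attach F (fun i => d i * v i r)]
    have h1 := congrArg Prod.fst hg
    rw [Prod.fst_sum] at h1
    have h2 := congrFun h1 r
    simp only [Finset.sum_apply, Prod.fst_zero, Pi.zero_apply] at h2
    simpa [hdmem] using h2
  set D : Finset ι := T.filter (fun i => d i ≠ 0) with hD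
  have hDF : D ⊆ F := by
    intro i hi
    rw [hD, mem_filter] at hi
    by_contra hiF
    exact hi.2 (hd0 i hiF)
  have hDne : D.Nonempty := by
    refine ⟨i0, ?_⟩
    rw [hD, mem_filter]
    refine ⟨hFT i0.2, ?_⟩
    rw [hdmem i0]; exact hgi0
  set τ : ι → ℝ := fun i => if 0 < d i then (1 - z i) / d i else z i / (-d i) with hτ
  have hτval_pos : ∀ i, 0 < d i → τ i = (1 - z i) / d i := by
    intro i h; simp only [hτ, if_pos h]
  have hτval_neg : ∀ i, ¬ 0 < d i → τ i = z i / (-d i) := by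
    intro i h; simp only [hτ, if_neg h]
  have hτpos : ∀ i ∈ D, 0 < τ i := by
    intro i hi
    have hiF := hDF hi
    obtain ⟨h0, h1⟩ := hFrac i hiF
    have hdne : d i ≠ 0 := (mem_filter.1 hi).2
    by_cases hpos : 0 < d i
    · rw [hτval_pos i hpos]; exact div_pos (by linarith) hpos
    · rw [hτval_neg i hpos]
      have : d i < 0 := lt_of_le_of_ne (not_lt.1 hpos) hdne
      exact div_pos h0 (by linarith)
  set τs : ℝ := D.inf' hDne τ with hτs
  have hτspos : 0 < τs := by
    rw [hτs, Finset.lt_inf'_iff]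
    exact fun i hi => hτpos i hi
  have hτsle : ∀ i ∈ D, τs ≤ τ i := fun i hi => Finset.inf'_le _ hi
  set z' : ι → ℝ := fun i => z i + τs * d i with hz'
  have hz'val : ∀ i, z' i = z i + τs * d i := fun i => rfl
  have hfix : ∀ i, d i = 0 → z' i = z i := by intro i h; rw [hz'val, h]; ring
  have hmemD : ∀ i ∈ T, d i ≠ 0 → i ∈ D := by
    intro i hi h; rw [hD, mem_filter]; exact ⟨hi, h⟩
  have hbounds : ∀ i ∈ T, 0 ≤ z' i ∧ z' i ≤ 1 := by
    intro i hiT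
    rcases eq_or_ne (d i) 0 with h | h
    · rw [hfix i h]; exact hz.1 i hiT
    · have hiD := hmemD i hiT h
      have hiF := hDF hiD
      obtain ⟨h0, h1⟩ := hFrac i hiF
      have hle := hτsle i hiD
      rw [hz'val]
      by_cases hpos : 0 < d i
      · have hτi := hτval_pos i hpos
        constructor
        · have : 0 ≤ τs * d i := le_of_lt (mul_pos hτspos hpos)
          linarith
        · have h2 : τs * d i ≤ τ i * d i := mul_le_mul_of_nonneg_right hle (le_of_lt hpos)
          have h3 : τ i * d i = 1 - z i := by
            rw [hτi, div_mul_cancel₀ _ (ne_of_gt hpos)]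
          linarith
      · have hneg : d i < 0 := lt_of_le_of_ne (not_lt.1 hpos) h
        have hτi := hτval_neg i hpos
        constructor
        · have h2 : τ i * d i ≤ τs * d i := mul_le_mul_of_nonpos_right hle (le_of_lt hneg)
          have h3 : τ i * d i = - z i := by
            rw [hτi, div_neg, neg_mul, div_mul_cancel₀ _ h]
          linarith
        · have : τs * d i ≤ 0 := le_of_lt (mul_neg_of_pos_of_neg hτspos hneg)
          linarith
  have hq' : QSet v T c z' := by
    refine ⟨hbounds, ?_, ?_⟩
    · have : ∀ i ∈ T, z' i = z i + τs * d i := fun i _ => hz'val i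
      rw [Finset.sum_congr rfl this, Finset.sum_add_distrib, ← Finset.mul_sum, hsum1, hz.2.1]
      ring
    · intro r
      have : ∀ i ∈ T, z' i * v i r = z i * v i r + τs * (d i * v i r) := by
        intro i _; rw [hz'val]; ring
      rw [Finset.sum_congr rfl this, Finset.sum_add_distrib, ← Finset.mul_sum,
        hsum2 r, hz.2.2 r]
      ring
  -- strict increase of integral count
  obtain ⟨istar, hiD, hinf⟩ := Finset.exists_mem_eq_inf' hDne τ
  have hts : τs = τ istar := hτs.trans hinf
  have histar : z' istar = 0 ∨ z' istar = 1 := by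
    have hiF := hDF hiD
    have hdne : d istar ≠ 0 := (mem_filter.1 hiD).2
    rw [hz'val, hts]
    by_cases hpos : 0 < d istar
    · right
      rw [hτval_pos istar hpos, div_mul_cancel₀ _ (ne_of_gt hpos)]
      ring
    · left
      have hneg : d istar < 0 := lt_of_le_of_ne (not_lt.1 hpos) hdne
      rw [hτval_neg istar hpos, div_neg, neg_mul, div_mul_cancel₀ _ hdne]
      ring
  have hsub : T.filter (fun i => z i = 0 ∨ z i = 1) ⊂ T.filter (fun i => z' i = 0 ∨ z' i = 1) := by
    constructor
    · intro i hi
      rw [mem_filter] at hi ⊢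
      refine ⟨hi.1, ?_⟩
      have hiF : i ∉ F := by
        rw [hF, mem_filter]
        rintro ⟨-, h0, h1⟩
        rcases hi.2 with h | h
        exacts [h0 h, h1 h]
      rw [hfix i (hd0 i hiF)]
      exact hi.2
    · intro hcon
      have h1 : istar ∈ T.filter (fun i => z' i = 0 ∨ z' i = 1) := by
        rw [mem_filter]; exact ⟨hFT (hDF hiD), histar⟩
      have h2 := hcon h1
      rw [mem_filter] at h2
      have hiF := hDF hiD
      rw [hF, mem_filter] at hiF
      rcases h2.2 with h | h
      exacts [hiF.2.1 h, hiF.2.2 h]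
  have hlt := Finset.card_lt_card hsub
  have hin : (T.filter (fun i => z' i = 0 ∨ z' i = 1)).card ∈ Aset := ⟨z', hq', rfl⟩
  have := le_csSup hAbdd hin
  omega

/-- feasibility of level `k` on support `T` -/
def Feas {m : ℕ} (v : ι → Fin m → ℝ) (T : Finset ι) (k : ℕ) : Prop :=
  ∃ lam, QSet v T ((k : ℝ) - (min k m : ℕ)) lam

lemma exists_zero_coord {m k : ℕ} (v : ι → Fin m → ℝ) (T : Finset ι) (z : ι → ℝ)
    (hT : T.card = k + 1) (hm : m ≤ k) (hq : QSet v T ((k : ℝ) - (m : ℝ)) z)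
    (hfrac : (T.filter (fun i => z i ≠ 0 ∧ z i ≠ 1)).card ≤ m + 1) :
    ∃ i ∈ T, z i = 0 := by
  classical
  by_contra hcon
  push_neg at hcon
  set F : Finset ι := T.filter (fun i => z i ≠ 0 ∧ z i ≠ 1) with hF
  set O : Finset ι := T.filter (fun i => z i = 1) with hO
  have hFeq : T.filter (fun i => ¬ z i = 1) = F := by
    rw [hF]
    apply Finset.filter_congr
    intro i hi
    constructor
    · intro h1; exact ⟨hcon i hi, h1⟩
    · intro h; exact h.2
  have hsplit : ∑ i ∈ T, z i = (∑ i ∈ O, z i) + ∑ i ∈ F, z i := by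
    rw [hO, ← hFeq]
    exact (Finset.sum_filter_add_sum_filter_not T (fun i => z i = 1) z).symm
  have hOsum : ∑ i ∈ O, z i = (O.card : ℝ) := by
    rw [Finset.sum_congr rfl (fun i hi => (mem_filter.1 hi).2)]
    simp
    rfl
  have hcards : O.card + F.card = k + 1 := by
    rw [hO, ← hFeq, ← hT]
    exact Finset.card_filter_add_card_filter_not (s := T) (p := fun i => z i = 1)
  have hFpos : ∀ i ∈ F, 0 < z i := by
    intro i hi
    have hiT : i ∈ T := filter_subset _ _ hi
    exact lt_of_le_of_ne (hq.1 i hiT).1 (Ne.symm (hcon i hiT))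
  rcases Finset.eq_empty_or_nonempty F with hFe | hFne
  · rw [hFe] at hsplit hcards
    simp only [Finset.sum_empty, Finset.card_empty, add_zero] at hsplit hcards
    rw [hq.2.1, hOsum] at hsplit
    have : (O.card : ℝ) = (k : ℝ) - m := by linarith [hsplit]
    rw [hcards] at this
    push_cast at this
    have hm0 : (0:ℝ) ≤ m := by positivity
    linarith
  · have hs : 0 < ∑ i ∈ F, z i := Finset.sum_pos hFpos hFne
    have h1 : ((k : ℝ) - m) = (O.card : ℝ) + ∑ i ∈ F, z i := by
      rw [← hq.2.1, hsplit, hOsum]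
    have h2 : (O.card : ℝ) = (k : ℝ) + 1 - F.card := by
      have := congrArg (Nat.cast : ℕ → ℝ) hcards
      push_cast at this
      linarith
    have h3 : ((F.card : ℝ)) ≤ m + 1 := by exact_mod_cast hfrac
    linarith

lemma step_down {m k : ℕ} (v : ι → Fin m → ℝ) (T : Finset ι)
    (hT : T.card = k + 1) (hfeas : Feas v T (k + 1)) :
    ∃ i ∈ T, Feas v (T.erase i) k := by
  classical
  have hTne : T.Nonempty := Finset.card_pos.1 (by omega)
  by_cases hk : k < m
  · obtain ⟨i, hi⟩ := hTne
    refine ⟨i, hi, 0, ?_, ?_, ?_⟩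
    · intro j _; norm_num
    · simp [min_eq_left (le_of_lt hk)]
    · intro r; simp
  · push_neg at hk
    obtain ⟨lam, hlam⟩ := hfeas
    have hmin : min (k+1) m = m := min_eq_right (by omega)
    rw [hmin] at hlam
    -- scale down to level k
    have hden : (0:ℝ) < (k:ℝ) + 1 - m := by
      have : (m:ℝ) ≤ k := by exact_mod_cast hk
      linarith
    set ρ : ℝ := ((k:ℝ) - m) / ((k:ℝ) + 1 - m) with hρ
    have hρ0 : 0 ≤ ρ := by
      apply div_nonneg _ (le_of_lt hden)
      have : (m:ℝ) ≤ k := by exact_mod_cast hk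
      linarith
    have hρ1 : ρ ≤ 1 := by
      rw [hρ, div_le_one hden]; linarith
    have hscaled : ∃ z, QSet v T ((k:ℝ) - (m:ℝ)) z := by
      refine ⟨fun i => ρ * lam i, ?_, ?_, ?_⟩
      · intro i hi
        obtain ⟨h0, h1⟩ := hlam.1 i hi
        constructor
        · exact mul_nonneg hρ0 h0
        · calc ρ * lam i ≤ 1 * 1 := mul_le_mul hρ1 h1 h0 zero_le_one
            _ = 1 := by ring
      · rw [← Finset.mul_sum, hlam.2.1]
        have h1 : ((k:ℕ)+1 : ℝ) - m = (k:ℝ) + 1 - m := by push_cast; ring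
        rw [hρ]
        push_cast
        field_simp
      · intro r
        have : ∀ i ∈ T, ρ * lam i * v i r = ρ * (lam i * v i r) := fun i _ => by ring
        rw [Finset.sum_congr rfl this, ← Finset.mul_sum, hlam.2.2 r, mul_zero]
    obtain ⟨z, hz, hzfrac⟩ := few_fractional v T _ hscaled
    obtain ⟨i0, hi0T, hi0z⟩ := exists_zero_coord v T z hT hk hz hzfrac
    refine ⟨i0, hi0T, z, ?_, ?_, ?_⟩
    · intro i hi
      exact hz.1 i (Finset.mem_of_mem_erase hi)
    · rw [Finset.sum_erase _ hi0z, hz.2.1, min_eq_right hk]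
    · intro r
      rw [Finset.sum_erase _ (by rw [hi0z, zero_mul]), hz.2.2 r]


lemma extend_down {m : ℕ} (v : ι → Fin m → ℝ) :
    ∀ (k : ℕ) (T : Finset ι), T.card = k → Feas v T k →
    ∃ S : ℕ → Finset ι, S k = T ∧ (∀ j ≤ k, (S j).card = j ∧ Feas v (S j) j) ∧
      ∀ j < k, S j ⊆ S (j + 1) := by
  intro k
  induction k with
  | zero =>
    intro T hT hf
    exact ⟨fun _ => T, rfl, fun j hj => by
      interval_cases j; exact ⟨hT, hf⟩, fun j hj => absurd hj (Nat.not_lt_zero j)⟩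
  | succ k ih =>
    intro T hT hf
    obtain ⟨i, hiT, hfe⟩ := step_down v T hT hf
    have hcard : (T.erase i).card = k := by
      rw [Finset.card_erase_of_mem hiT, hT]
      omega
    obtain ⟨S', hS'k, hS'prop, hS'sub⟩ := ih (T.erase i) hcard hfe
    classical
    refine ⟨fun j => if j = k + 1 then T else S' j, by simp, ?_, ?_⟩
    · intro j hj
      by_cases hjk : j = k + 1
      · subst hjk; simp [hT, hf]
      · have hj' : j ≤ k := by omega
        simpa [hjk] using hS'prop j hj'
    · intro j hj
      by_cases hjk : j = k
      · have h1 : j ≠ k + 1 := by omega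
        have h2 : j + 1 = k + 1 := by omega
        simp only [if_neg h1, if_pos h2]
        rw [hjk, hS'k]
        exact Finset.erase_subset _ _
      · have h1 : j ≠ k + 1 := by omega
        have h2 : j + 1 ≠ k + 1 := by omega
        simp only [h1, h2, if_neg]
        exact hS'sub j (by omega)

lemma steinitz_chain {m : ℕ} (t : ℕ) (v : Fin t → Fin m → ℝ) (R : ℝ) (hR : 0 ≤ R)
    (hv : ∀ l r, |v l r| ≤ R) (hsum : ∀ r, ∑ l, v l r = 0) :
    ∃ S : ℕ → Finset (Fin t), (∀ j ≤ t, (S j).card = j) ∧ (∀ j, j < t → S j ⊆ S (j + 1)) ∧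
      (∀ j ≤ t, ∀ r, |∑ i ∈ S j, v i r| ≤ (m : ℝ) * R) := by
  classical
  have hcard : (Finset.univ : Finset (Fin t)).card = t := by simp
  have hfeas : Feas v (Finset.univ : Finset (Fin t)) t := by
    rcases Nat.eq_zero_or_pos t with ht | ht
    · subst ht
      exact ⟨0, fun i _ => by norm_num, by simp, fun r => by simp⟩
    · set c0 : ℝ := ((t : ℝ) - (min t m : ℕ)) / t with hc0
      have htR : (0:ℝ) < t := by exact_mod_cast ht
      have hminle : (min t m : ℕ) ≤ t := min_le_left _ _
      have hminleR : ((min t m : ℕ) : ℝ) ≤ t := by exact_mod_cast hminle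
      refine ⟨fun _ => c0, fun i _ => ?_, ?_, fun r => ?_⟩
      · constructor
        · apply div_nonneg _ (le_of_lt htR); linarith
        · rw [hc0, div_le_one htR]
          have : (0:ℝ) ≤ ((min t m : ℕ) : ℝ) := by positivity
          linarith
      · rw [Finset.sum_const, hcard, nsmul_eq_mul, hc0]
        field_simp
      · have : ∀ i ∈ (Finset.univ : Finset (Fin t)), c0 * v i r = c0 * v i r := fun _ _ => rfl
        rw [← Finset.mul_sum, hsum r, mul_zero]
  obtain ⟨S, hSt, hSprop, hSsub⟩ := extend_down v t Finset.univ hcard hfeas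
  refine ⟨S, fun j hj => (hSprop j hj).1, hSsub, ?_⟩
  intro j hj r
  obtain ⟨hcardj, lam, hlam⟩ := hSprop j hj
  have h1 : ∑ i ∈ S j, v i r = ∑ i ∈ S j, (1 - lam i) * v i r := by
    have : ∀ i ∈ S j, (1 - lam i) * v i r = v i r - lam i * v i r := fun i _ => by ring
    rw [Finset.sum_congr rfl this, Finset.sum_sub_distrib, hlam.2.2 r, sub_zero]
  have h2 : |∑ i ∈ S j, (1 - lam i) * v i r| ≤ ∑ i ∈ S j, (1 - lam i) * R := by
    refine (Finset.abs_sum_le_sum_abs _ _).trans (Finset.sum_le_sum ?_)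
    intro i hi
    rw [abs_mul, abs_of_nonneg (by linarith [(hlam.1 i hi).2] : (0:ℝ) ≤ 1 - lam i)]
    exact mul_le_mul_of_nonneg_left (hv i r) (by linarith [(hlam.1 i hi).2])
  have h3 : ∑ i ∈ S j, (1 - lam i) * R = ((min j m : ℕ) : ℝ) * R := by
    rw [← Finset.sum_mul]
    congr 1
    rw [Finset.sum_sub_distrib, Finset.sum_const, hcardj, hlam.2.1]
    push_cast
    ring
  have h4 : ((min j m : ℕ) : ℝ) * R ≤ (m : ℝ) * R := by
    apply mul_le_mul_of_nonneg_right _ hR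
    exact_mod_cast min_le_right j m
  rw [h1]
  exact h2.trans (h3.le.trans h4)


end SteinitzDP


lemma exists_enum (n : ℕ) (c : Fin n → ℕ) (t : ℕ) (ht : ∑ i, c i = t) :
    ∃ σ0 : Fin t → Fin n, ∀ {M : Type} [AddCommMonoid M] (g : Fin n → M),
      ∑ l, g (σ0 l) = ∑ i, c i • g i := by
  classical
  subst ht
  have hcard : Fintype.card (Σ i : Fin n, Fin (c i)) = ∑ i, c i := by simp
  let e : (Σ i : Fin n, Fin (c i)) ≃ Fin (∑ i, c i) := Fintype.equivFinOfCardEq hcard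
  refine ⟨fun l => (e.symm l).1, ?_⟩
  intro M _ g
  have h1 : ∑ l, g ((e.symm l).1) = ∑ p : Σ i : Fin n, Fin (c i), g p.1 :=
    Equiv.sum_comp e.symm (fun p => g p.1)
  rw [h1, ← Finset.univ_sigma_univ, ← Finset.sum_sigma' Finset.univ (fun _ => Finset.univ) (fun i _ => g i)]
  simp

lemma prefix_sum_eq (t : ℕ) (S : ℕ → Finset (Fin t))
    (hcard : ∀ j ≤ t, (S j).card = j) (hsub : ∀ j, j < t → S j ⊆ S (j + 1))
    (pick : Fin t → Fin t)
    (hpick : ∀ l : Fin t, pick l ∉ S l ∧ S ((l : ℕ) + 1) = insert (pick l) (S l))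
    {M : Type} [AddCommMonoid M] (g : Fin t → M) :
    ∀ j, j ≤ t → ∑ l ∈ univ.filter (fun l : Fin t => (l : ℕ) < j), g (pick l) = ∑ i ∈ S j, g i := by
  intro j
  induction j with
  | zero =>
    intro _
    have h1 : univ.filter (fun l : Fin t => (l : ℕ) < 0) = ∅ := by
      apply Finset.filter_false_of_mem; intro l _; omega
    have h2 : S 0 = ∅ := Finset.card_eq_zero.1 (hcard 0 (Nat.zero_le t))
    rw [h1, h2]
    simp
  | succ j ih =>
    intro hj
    have hjt : j < t := hj
    have hfil : univ.filter (fun l : Fin t => (l : ℕ) < j + 1)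
        = insert ⟨j, hjt⟩ (univ.filter (fun l : Fin t => (l : ℕ) < j)) := by
      ext l
      simp only [mem_filter, mem_univ, true_and, mem_insert, Fin.ext_iff]
      omega
    have hnot : (⟨j, hjt⟩ : Fin t) ∉ univ.filter (fun l : Fin t => (l : ℕ) < j) := by
      simp
    rw [hfil, Finset.sum_insert hnot, ih (le_of_lt hj)]
    obtain ⟨hp1, hp2⟩ := hpick ⟨j, hjt⟩
    rw [show ((⟨j, hjt⟩ : Fin t) : ℕ) = j from rfl] at hp1 hp2
    rw [hp2, Finset.sum_insert hp1]

/-- Structural correctness of the dynamic-programming feasibility algorithm: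
`Ax = b, x ∈ ℤ^n_{≥0}` has a solution iff there is a sequence of column indices
`i_1, …, i_t` whose columns sum to `b` and all of whose partial sums lie in the set
`𝒮 = {x ∈ ℤ^m : ∃ j' ∈ {1,…,t}, ‖x − (j'/t)·b‖_∞ ≤ 2mΔ}`.
The norm on `Fin m → ℝ` is the maximum norm. -/
theorem feasibility_iff_bounded_walk
    (m n : ℕ) (Δ : ℤ) (hΔ : 1 ≤ Δ)
    (A : Matrix (Fin m) (Fin n) ℤ)
    (hA : ∀ i j, |A i j| ≤ Δ)
    (b : Fin m → ℤ) :
    (∃ x : Fin n → ℤ, (∀ i, 0 ≤ x i) ∧ A.mulVec x = b) ↔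
    (∃ (t : ℕ) (σ : Fin t → Fin n),
      (∑ l : Fin t, (fun r : Fin m => A r (σ l))) = b ∧
      ∀ j : ℕ, 1 ≤ j → j ≤ t →
        ∃ j' : ℕ, 1 ≤ j' ∧ j' ≤ t ∧
          ‖(fun r : Fin m =>
              ((∑ l ∈ Finset.univ.filter (fun l : Fin t => (l : ℕ) < j), A r (σ l) : ℤ) : ℝ)) -
            ((j' : ℝ) / (t : ℝ)) • (fun r : Fin m => (b r : ℝ))‖
              ≤ 2 * (m : ℝ) * (Δ : ℝ)) := by
  classical
  have hΔR : (1 : ℝ) ≤ (Δ : ℝ) := by exact_mod_cast hΔ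
  constructor
  · -- forward direction
    rintro ⟨x, hx0, hAx⟩
    set c : Fin n → ℕ := fun i => (x i).toNat with hc
    have hbr : ∀ r, b r = ∑ i, c i • A r i := by
      intro r
      rw [← hAx]
      have : A.mulVec x r = ∑ i, A r i * x i := by
        simp [Matrix.mulVec, dotProduct]
      rw [this]
      apply Finset.sum_congr rfl
      intro i _
      rw [nsmul_eq_mul, hc, Int.toNat_of_nonneg (hx0 i)]
      ring
    rcases Nat.eq_zero_or_pos (∑ i, c i) with ht0 | htpos
    · -- t = 0 : b = 0
      have hb0 : b = 0 := by
        funext r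
        rw [hbr r]
        apply Finset.sum_eq_zero
        intro i _
        have : c i = 0 := by
          have := (Finset.sum_eq_zero_iff.1 ht0) i (Finset.mem_univ i)
          exact this
        rw [this, zero_smul]
      refine ⟨0, Fin.elim0, ?_, ?_⟩
      · rw [hb0]
        simp
      · intro j hj1 hj2
        omega
    · obtain ⟨t, ht⟩ : ∃ t', ∑ i, c i = t' := ⟨_, rfl⟩
      rw [ht] at htpos
      obtain ⟨σ0, hσ0⟩ := exists_enum n c t ht
      have hcolsum : ∀ r, ∑ l, A r (σ0 l) = b r := by
        intro r
        rw [hσ0 (fun i => A r i), hbr r]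
      have htR : (0 : ℝ) < (t : ℝ) := by exact_mod_cast htpos
      set v : Fin t → Fin m → ℝ := fun l r => ((A r (σ0 l) : ℤ) : ℝ) - (b r : ℝ) / t with hv
      have hvval : ∀ l r, v l r = ((A r (σ0 l) : ℤ) : ℝ) - (b r : ℝ) / t := fun _ _ => rfl
      have hcolsumR : ∀ r, ∑ l, ((A r (σ0 l) : ℤ) : ℝ) = (b r : ℝ) := by
        intro r
        rw [← Int.cast_sum]
        exact_mod_cast congrArg (Int.cast : ℤ → ℝ) (hcolsum r)
      have hb_bound : ∀ r, |(b r : ℝ)| ≤ (t : ℝ) * Δ := by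
        intro r
        rw [← hcolsumR r]
        refine (Finset.abs_sum_le_sum_abs _ _).trans ?_
        have h1 : ∀ l ∈ (Finset.univ : Finset (Fin t)), |((A r (σ0 l) : ℤ) : ℝ)| ≤ (Δ : ℝ) := by
          intro l _
          exact_mod_cast hA r (σ0 l)
        refine (Finset.sum_le_sum h1).trans ?_
        rw [Finset.sum_const, Finset.card_univ, Fintype.card_fin, nsmul_eq_mul]
      have hvbound : ∀ l r, |v l r| ≤ 2 * (Δ : ℝ) := by
        intro l r
        rw [hvval]
        have h1 : |(b r : ℝ) / t| ≤ (Δ : ℝ) := by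
          rw [abs_div, abs_of_pos htR, div_le_iff₀ htR]
          calc |(b r : ℝ)| ≤ (t : ℝ) * Δ := hb_bound r
            _ = (Δ : ℝ) * t := by ring
        have h2 : |((A r (σ0 l) : ℤ) : ℝ)| ≤ (Δ : ℝ) := by exact_mod_cast hA r (σ0 l)
        have h3 := abs_add_le ((A r (σ0 l) : ℤ) : ℝ) (-((b r : ℝ) / t))
        rw [abs_neg] at h3
        rw [sub_eq_add_neg]
        linarith
      have hvsum : ∀ r, ∑ l, v l r = 0 := by
        intro r
        have : ∀ l ∈ (Finset.univ : Finset (Fin t)),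
            v l r = ((A r (σ0 l) : ℤ) : ℝ) - (b r : ℝ) / t := fun l _ => hvval l r
        rw [Finset.sum_congr rfl this, Finset.sum_sub_distrib, hcolsumR r,
          Finset.sum_const, Finset.card_univ, Fintype.card_fin, nsmul_eq_mul]
        field_simp
        ring
      have hRpos : (0 : ℝ) ≤ 2 * (Δ : ℝ) := by linarith
      obtain ⟨S, hcardS, hsubS, hboundS⟩ := steinitz_chain t v (2 * (Δ : ℝ)) hRpos hvbound hvsum
      -- pick the new element at each step
      have hins : ∀ l : Fin t, ∃ i : Fin t, i ∉ S (l : ℕ) ∧ S ((l : ℕ) + 1) = insert i (S (l : ℕ)) := by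
        intro l
        have hsub1 : S (l : ℕ) ⊆ S ((l : ℕ) + 1) := hsubS _ l.isLt
        have hc1 : (S (l : ℕ)).card = (l : ℕ) := hcardS _ (le_of_lt l.isLt)
        have hc2 : (S ((l : ℕ) + 1)).card = (l : ℕ) + 1 := hcardS _ l.isLt
        have hne : S (l : ℕ) ≠ S ((l : ℕ) + 1) := by
          intro h
          rw [h, hc2] at hc1
          omega
        obtain ⟨i, hi1, hi2⟩ := Finset.exists_of_ssubset (lt_of_le_of_ne hsub1 hne)
        refine ⟨i, hi2, ?_⟩
        have hsub2 : insert i (S (l : ℕ)) ⊆ S ((l : ℕ) + 1) :=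
          Finset.insert_subset hi1 hsub1
        have hcard3 : (insert i (S (l : ℕ))).card = (l : ℕ) + 1 := by
          rw [Finset.card_insert_of_notMem hi2, hc1]
        exact (Finset.eq_of_subset_of_card_le hsub2 (by omega)).symm
      choose pick hpick1 hpick2 using hins
      have hpick : ∀ l : Fin t, pick l ∉ S (l : ℕ) ∧ S ((l : ℕ) + 1) = insert (pick l) (S (l : ℕ)) :=
        fun l => ⟨hpick1 l, hpick2 l⟩
      refine ⟨t, fun l => σ0 (pick l), ?_, ?_⟩
      · -- total sum
        funext r
        rw [Finset.sum_apply]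
        have hft : Finset.univ.filter (fun l : Fin t => (l : ℕ) < t) = Finset.univ := by
          apply Finset.filter_true_of_mem
          intro l _
          exact l.isLt
        have hSt : S t = Finset.univ := by
          apply Finset.eq_univ_of_card
          rw [hcardS t le_rfl, Fintype.card_fin]
        have h0 := prefix_sum_eq t S hcardS hsubS pick hpick (fun i => A r (σ0 i)) t le_rfl
        rw [hft, hSt] at h0
        have h2 : ∑ l : Fin t, A r (σ0 (pick l)) = ∑ i : Fin t, A r (σ0 i) := h0
        rw [h2, hcolsum r]
      · -- partial sums near the segment
        intro j hj1 hjt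
        refine ⟨j, hj1, hjt, ?_⟩
        have h2mΔ : (0 : ℝ) ≤ 2 * (m : ℝ) * (Δ : ℝ) := by positivity
        rw [pi_norm_le_iff_of_nonneg h2mΔ]
        intro r
        simp only [Pi.sub_apply, Pi.smul_apply, smul_eq_mul, Real.norm_eq_abs]
        have hpref : ∑ l ∈ Finset.univ.filter (fun l : Fin t => (l : ℕ) < j),
              ((A r (σ0 (pick l)) : ℤ) : ℝ) = ∑ i ∈ S j, ((A r (σ0 i) : ℤ) : ℝ) :=
          prefix_sum_eq t S hcardS hsubS pick hpick
            (fun i => ((A r (σ0 i) : ℤ) : ℝ)) j hjt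
        have hSsum : ∑ i ∈ S j, v i r
            = (∑ i ∈ S j, ((A r (σ0 i) : ℤ) : ℝ)) - (j : ℝ) * ((b r : ℝ) / t) := by
          have : ∀ i ∈ S j, v i r = ((A r (σ0 i) : ℤ) : ℝ) - (b r : ℝ) / t :=
            fun i _ => hvval i r
          rw [Finset.sum_congr rfl this, Finset.sum_sub_distrib, Finset.sum_const,
            hcardS j hjt, nsmul_eq_mul]
        have hkey : ((∑ l ∈ Finset.univ.filter (fun l : Fin t => (l : ℕ) < j),
              A r (σ0 (pick l)) : ℤ) : ℝ) - (j : ℝ) / (t : ℝ) * (b r : ℝ)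
            = ∑ i ∈ S j, v i r := by
          rw [hSsum, ← hpref]
          rw [Int.cast_sum]
          ring
        rw [hkey]
        have := hboundS j hjt r
        calc |∑ i ∈ S j, v i r| ≤ (m : ℝ) * (2 * (Δ : ℝ)) := this
          _ = 2 * (m : ℝ) * (Δ : ℝ) := by ring
  · -- reverse direction
    rintro ⟨t, σ, hsum, -⟩
    refine ⟨fun i => ((Finset.univ.filter (fun l : Fin t => σ l = i)).card : ℤ),
      fun i => by positivity, ?_⟩
    funext r
    have hr : ∑ l, A r (σ l) = b r := by
      have := congrFun hsum r
      rw [Finset.sum_apply] at this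
      exact this
    have h1 : A.mulVec (fun i => ((Finset.univ.filter (fun l : Fin t => σ l = i)).card : ℤ)) r
        = ∑ i, A r i * ((Finset.univ.filter (fun l : Fin t => σ l = i)).card : ℤ) := by
      simp [Matrix.mulVec, dotProduct]
    rw [h1, ← hr, ← Finset.sum_fiberwise (Finset.univ : Finset (Fin t)) σ (fun l => A r (σ l))]
    apply Finset.sum_congr rfl
    intro i _
    have : ∀ l ∈ Finset.univ.filter (fun l : Fin t => σ l = i), A r (σ l) = A r i := by
      intro l hl
      rw [(Finset.mem_filter.1 hl).2]
    rw [Finset.sum_congr rfl this, Finset.sum_const, nsmul_eq_mul]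
    ring
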